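/- Let n ≥ 2 be an integer. Then ∫₁^∞ z^{1−5/(2n)}·(z⁵−1)^{1/n−1}·(z+1) dz = (1/5)·( B(2/5 − 1/(2n), 1/n) + B(3/5 − 1/(2n), 1/n) ), where B(a,b) = Γ(a)Γ(b)/Γ(a+b) denotes the Euler Beta function. -/

import Mathlib

open Real MeasureTheory

noncomputable section

/-- The Euler Beta function `B(a,b) = Γ(a)Γ(b)/Γ(a+b)`. -/
def eulerBeta (a b : ℝ) : ℝ := Real.Gamma a * Real.Gamma b / Real.Gamma (a + b)

lemma realBeta_integral (a b : ℝ) (ha : 0 < a) (hb : 0 < b) :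
    ∫ x in Set.Ioo (0:ℝ) 1, x ^ (a-1) * (1-x) ^ (b-1) = eulerBeta a b := by
  have hFg : ∀ x ∈ Set.Ioo (0:ℝ) 1,
      ((x:ℂ) ^ ((a:ℂ)-1) * (1-(x:ℂ)) ^ ((b:ℂ)-1)) = ((x ^ (a-1) * (1-x) ^ (b-1) : ℝ) : ℂ) := by
    intro x hx
    have h1 : ((x:ℂ)) ^ ((a:ℂ)-1) = ((x ^ (a-1) : ℝ) : ℂ) := by
      rw [show ((a:ℂ)-1) = ((a-1:ℝ):ℂ) by push_cast; ring, Complex.ofReal_cpow hx.1.le]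
    have h2 : (1-(x:ℂ)) ^ ((b:ℂ)-1) = (((1-x) ^ (b-1) : ℝ) : ℂ) := by
      rw [show (1-(x:ℂ)) = ((1-x:ℝ):ℂ) by push_cast; ring,
        show ((b:ℂ)-1) = ((b-1:ℝ):ℂ) by push_cast; ring,
        Complex.ofReal_cpow (by linarith [hx.2])]
    rw [h1, h2, Complex.ofReal_mul]
  have hkey : Complex.betaIntegral a b
      = ((∫ x in Set.Ioo (0:ℝ) 1, x ^ (a-1) * (1-x) ^ (b-1) : ℝ) : ℂ) := by
    rw [Complex.betaIntegral, intervalIntegral.integral_of_le (by norm_num : (0:ℝ) ≤ 1),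
      MeasureTheory.integral_Ioc_eq_integral_Ioo,
      MeasureTheory.setIntegral_congr_fun measurableSet_Ioo hFg]
    exact integral_ofReal
  have hgamma := Complex.Gamma_mul_Gamma_eq_betaIntegral
    (by simpa using ha : 0 < Complex.re (a:ℂ)) (by simpa using hb : 0 < Complex.re (b:ℂ))
  rw [hkey] at hgamma
  have hreal : Real.Gamma a * Real.Gamma b
      = Real.Gamma (a+b) * ∫ x in Set.Ioo (0:ℝ) 1, x ^ (a-1) * (1-x) ^ (b-1) := by
    rw [← Complex.ofReal_add, Complex.Gamma_ofReal, Complex.Gamma_ofReal, Complex.Gamma_ofReal,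
      ← Complex.ofReal_mul, ← Complex.ofReal_mul] at hgamma
    exact_mod_cast hgamma
  rw [eulerBeta, hreal, mul_div_cancel_left₀]
  exact (Real.Gamma_pos_of_pos (by linarith)).ne'

lemma realBeta_integrable (a b : ℝ) (ha : 0 < a) (hb : 0 < b) :
    IntegrableOn (fun x => x ^ (a-1) * (1-x) ^ (b-1)) (Set.Ioo (0:ℝ) 1) := by
  have hc := (Complex.betaIntegral_convergent
    (by simpa using ha : 0 < Complex.re (a:ℂ)) (by simpa using hb : 0 < Complex.re (b:ℂ))).1
  have hc' : IntegrableOn (fun x : ℝ => (x:ℂ) ^ ((a:ℂ)-1) * (1-(x:ℂ)) ^ ((b:ℂ)-1))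
      (Set.Ioo (0:ℝ) 1) := hc.mono_set Set.Ioo_subset_Ioc_self
  refine (hc'.re).congr ?_
  refine ((ae_restrict_iff' measurableSet_Ioo).2 (Filter.Eventually.of_forall fun x hx => ?_))
  have h1 : ((x:ℂ)) ^ ((a:ℂ)-1) = ((x ^ (a-1) : ℝ) : ℂ) := by
    rw [show ((a:ℂ)-1) = ((a-1:ℝ):ℂ) by push_cast; ring, Complex.ofReal_cpow hx.1.le]
  have h2 : (1-(x:ℂ)) ^ ((b:ℂ)-1) = (((1-x) ^ (b-1) : ℝ) : ℂ) := by
    rw [show (1-(x:ℂ)) = ((1-x:ℝ):ℂ) by push_cast; ring,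
      show ((b:ℂ)-1) = ((b-1:ℝ):ℂ) by push_cast; ring,
      Complex.ofReal_cpow (by linarith [hx.2])]
  simp [h1, h2, ← Complex.ofReal_mul]

lemma sc_key_pointwise (a b : ℝ) {z : ℝ} (hz : 1 < z) :
    |(-5) * z ^ (-6:ℝ)| • ((z ^ (-5:ℝ)) ^ (a-1) * (1 - z ^ (-5:ℝ)) ^ (b-1))
      = 5 * z ^ (4-5*a-5*b) * (z^5 - 1) ^ (b-1) := by
  have hz0 : (0:ℝ) < z := lt_trans one_pos hz
  have hz5 : (1:ℝ) < z ^ 5 := one_lt_pow₀ hz (by norm_num)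
  have e1 : z ^ (-5:ℝ) = (z^5)⁻¹ := by
    rw [show (-5:ℝ) = -((5:ℕ):ℝ) by norm_num, Real.rpow_neg hz0.le, Real.rpow_natCast]
  have e2 : 1 - z ^ (-5:ℝ) = (z^5 - 1) * z ^ (-5:ℝ) := by
    rw [e1]; field_simp
  have habs : |(-5) * z ^ (-6:ℝ)| = 5 * z ^ (-6:ℝ) := by
    rw [abs_mul, abs_of_pos (Real.rpow_pos_of_pos hz0 _)]; norm_num
  have hmul : ((z^5 - 1) * z ^ (-5:ℝ)) ^ (b-1)
      = (z^5 - 1) ^ (b-1) * (z ^ (-5:ℝ)) ^ (b-1) :=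
    Real.mul_rpow (by linarith) (Real.rpow_nonneg hz0.le _)
  have hp1 : (z ^ (-5:ℝ)) ^ (a-1) = z ^ ((-5)*(a-1)) := (Real.rpow_mul hz0.le _ _).symm
  have hp2 : (z ^ (-5:ℝ)) ^ (b-1) = z ^ ((-5)*(b-1)) := (Real.rpow_mul hz0.le _ _).symm
  have hcomb : z ^ (-6:ℝ) * (z ^ ((-5)*(a-1)) * z ^ ((-5)*(b-1))) = z ^ (4-5*a-5*b) := by
    rw [← Real.rpow_add hz0, ← Real.rpow_add hz0]; ring_nf
  rw [smul_eq_mul, habs, e2, hmul, hp1, hp2]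
  calc 5 * z ^ (-6:ℝ) * (z ^ ((-5)*(a-1)) * ((z^5-1)^(b-1) * z ^ ((-5)*(b-1))))
      = 5 * (z ^ (-6:ℝ) * (z ^ ((-5)*(a-1)) * z ^ ((-5)*(b-1)))) * (z^5-1)^(b-1) := by ring
    _ = 5 * z ^ (4-5*a-5*b) * (z^5 - 1) ^ (b-1) := by rw [hcomb]

lemma sc_image : (fun z : ℝ => z ^ (-5:ℝ)) '' Set.Ioi 1 = Set.Ioo 0 1 := by
  ext t
  constructor
  · rintro ⟨z, hz, rfl⟩
    exact ⟨Real.rpow_pos_of_pos (lt_trans one_pos hz) _,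
      Real.rpow_lt_one_of_one_lt_of_neg hz (by norm_num)⟩
  · intro ht
    refine ⟨t ^ (-(1/5) : ℝ), ?_, ?_⟩
    · exact (Real.one_lt_rpow_iff_of_pos ht.1).2 (Or.inr ⟨ht.2, by norm_num⟩)
    · show (t ^ (-(1/5):ℝ)) ^ (-5:ℝ) = t
      rw [← Real.rpow_mul ht.1.le]; norm_num

lemma sc_inj : Set.InjOn (fun z : ℝ => z ^ (-5:ℝ)) (Set.Ioi 1) := by
  intro x hx y hy h
  have h' := congrArg (fun t : ℝ => t ^ ((-5:ℝ))⁻¹) h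
  simp only at h'
  rwa [← Real.rpow_mul (le_of_lt (lt_trans one_pos hx)),
    ← Real.rpow_mul (le_of_lt (lt_trans one_pos hy)),
    mul_inv_cancel₀ (by norm_num : (-5:ℝ) ≠ 0), Real.rpow_one, Real.rpow_one] at h'

lemma sc_deriv : ∀ z ∈ Set.Ioi (1:ℝ),
    HasDerivWithinAt (fun z : ℝ => z ^ (-5:ℝ)) ((-5) * z ^ (-6:ℝ)) (Set.Ioi 1) z := by
  intro z hz
  have h := Real.hasDerivAt_rpow_const (p := -5) (Or.inl (ne_of_gt (lt_trans one_pos hz)))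
  rw [show (-6:ℝ) = -5 - 1 by norm_num]
  exact h.hasDerivWithinAt

lemma sc_subst (a b : ℝ) :
    ∫ x in Set.Ioo (0:ℝ) 1, x ^ (a-1) * (1-x) ^ (b-1)
      = ∫ z in Set.Ioi (1:ℝ), 5 * z ^ (4-5*a-5*b) * (z^5-1) ^ (b-1) := by
  rw [← sc_image, integral_image_eq_integral_abs_deriv_smul measurableSet_Ioi sc_deriv sc_inj]
  exact setIntegral_congr_fun measurableSet_Ioi fun z hz => sc_key_pointwise a b hz

lemma sc_integrable (a b : ℝ) (ha : 0 < a) (hb : 0 < b) :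
    IntegrableOn (fun z => 5 * z ^ (4-5*a-5*b) * (z^5-1) ^ (b-1)) (Set.Ioi (1:ℝ)) := by
  have h0 : IntegrableOn (fun x => x ^ (a-1) * (1-x) ^ (b-1))
      ((fun z : ℝ => z ^ (-5:ℝ)) '' Set.Ioi 1) := by
    rw [sc_image]; exact realBeta_integrable a b ha hb
  have h1 := (integrableOn_image_iff_integrableOn_abs_deriv_smul
    measurableSet_Ioi sc_deriv sc_inj _).1 h0
  exact h1.congr_fun (fun z hz => sc_key_pointwise a b hz) measurableSet_Ioi

/-- For `n ≥ 2`, the side-length integral `∫₁^∞ z^{1−5/2n}(z⁵−1)^{1/n−1}(z+1) dz` equals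
`(1/5)·(B(2/5 − 1/2n, 1/n) + B(3/5 − 1/2n, 1/n))`. -/
theorem schwarz_christoffel_integral_as_beta_values
    (n : ℕ) (hn : 2 ≤ n) :
    (∫ z in Set.Ioi (1 : ℝ),
        z ^ (1 - 5 / (2 * (n : ℝ))) * (z ^ 5 - 1) ^ ((1 : ℝ) / n - 1) * (z + 1))
      = (1 / 5) * (eulerBeta (2 / 5 - 1 / (2 * n)) (1 / n)
          + eulerBeta (3 / 5 - 1 / (2 * n)) (1 / n)) := by
  have hn2 : (2:ℝ) ≤ (n:ℝ) := by exact_mod_cast hn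
  have hn0 : (0:ℝ) < (n:ℝ) := by linarith
  have hfrac : 1 / (2*(n:ℝ)) ≤ 1/4 := by
    apply div_le_div_of_nonneg_left (by norm_num) (by norm_num); linarith
  have ha1 : 0 < 2/5 - 1/(2*(n:ℝ)) := by linarith
  have ha2 : 0 < 3/5 - 1/(2*(n:ℝ)) := by linarith
  have hb : 0 < 1/(n:ℝ) := by positivity
  have he1 : 4 - 5*(2/5 - 1/(2*(n:ℝ))) - 5*(1/(n:ℝ)) = 2 - 5/(2*(n:ℝ)) := by
    field_simp; ring
  have he2 : 4 - 5*(3/5 - 1/(2*(n:ℝ))) - 5*(1/(n:ℝ)) = 1 - 5/(2*(n:ℝ)) := by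
    field_simp; ring
  have hB1 : eulerBeta (2/5 - 1/(2*(n:ℝ))) (1/(n:ℝ))
      = ∫ z in Set.Ioi (1:ℝ), 5 * z ^ (2 - 5/(2*(n:ℝ))) * (z^5-1) ^ ((1:ℝ)/n - 1) := by
    rw [← realBeta_integral _ _ ha1 hb, sc_subst]
    simp only [he1]
  have hB2 : eulerBeta (3/5 - 1/(2*(n:ℝ))) (1/(n:ℝ))
      = ∫ z in Set.Ioi (1:ℝ), 5 * z ^ (1 - 5/(2*(n:ℝ))) * (z^5-1) ^ ((1:ℝ)/n - 1) := by
    rw [← realBeta_integral _ _ ha2 hb, sc_subst]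
    simp only [he2]
  have hi1 : IntegrableOn
      (fun z : ℝ => 5 * z ^ (2 - 5/(2*(n:ℝ))) * (z^5-1) ^ ((1:ℝ)/n - 1)) (Set.Ioi 1) := by
    have h := sc_integrable _ _ ha1 hb
    simpa only [he1] using h
  have hi2 : IntegrableOn
      (fun z : ℝ => 5 * z ^ (1 - 5/(2*(n:ℝ))) * (z^5-1) ^ ((1:ℝ)/n - 1)) (Set.Ioi 1) := by
    have h := sc_integrable _ _ ha2 hb
    simpa only [he2] using h
  have hpt : ∀ z ∈ Set.Ioi (1:ℝ),
      z ^ (1 - 5/(2*(n:ℝ))) * (z^5-1) ^ ((1:ℝ)/n - 1) * (z+1)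
        = (1/5) * (5 * z ^ (2 - 5/(2*(n:ℝ))) * (z^5-1) ^ ((1:ℝ)/n - 1)
          + 5 * z ^ (1 - 5/(2*(n:ℝ))) * (z^5-1) ^ ((1:ℝ)/n - 1)) := by
    intro z hz
    have hz0 : (0:ℝ) < z := lt_trans one_pos hz
    have hzz : z ^ (2 - 5/(2*(n:ℝ))) = z ^ (1 - 5/(2*(n:ℝ))) * z := by
      rw [show (2 - 5/(2*(n:ℝ))) = (1 - 5/(2*(n:ℝ))) + 1 by ring, Real.rpow_add_one hz0.ne']
    rw [hzz]; ring
  rw [setIntegral_congr_fun measurableSet_Ioi hpt, MeasureTheory.integral_const_mul,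
    MeasureTheory.integral_add hi1 hi2, hB1, hB2]

end
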